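/- Let H be a real inner product space, and let l_m : H → ℝ and l_s : H → ℝ be everywhere differentiable functions such that the gradient of l_m is β-Lipschitz for some β > 0 and ‖∇l_s(θ)‖ ≤ G for all θ, where G > 0. Let ε > 0. Then for every θ with ⟨∇l_m(θ), ∇l_s(θ)⟩ > ε and every learning rate η satisfying 0 < η < 2ε / (β G²), one step of gradient descent on the self-supervised loss strictly decreases the main loss: l_m(θ − η ∇l_s(θ)) < l_m(θ). -/

import Mathlib

open scoped RealInnerProductSpace

/-- Descent lemma: if gm is a β-Lipschitz gradient field for lm, then
`lm (θ - v) ≤ lm θ - ⟪gm θ, v⟫ + β/2 * ‖v‖²`. -/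
lemma descent_lemma
    {H : Type*} [NormedAddCommGroup H] [InnerProductSpace ℝ H] [CompleteSpace H]
    (lm : H → ℝ) (gm : H → H)
    (hgm : ∀ θ : H, HasGradientAt lm (gm θ) θ)
    (β : ℝ) (hβ : 0 < β)
    (hlip : LipschitzWith β.toNNReal gm)
    (θ v : H) :
    lm (θ - v) ≤ lm θ - ⟪gm θ, v⟫ + β / 2 * ‖v‖ ^ 2 := by
  set ψ : ℝ → ℝ := fun t => lm (θ - t • v) + t * ⟪gm θ, v⟫ - t ^ 2 * (β / 2 * ‖v‖ ^ 2)
    with hψ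
  have hline : ∀ t : ℝ, HasDerivAt (fun t : ℝ => θ - t • v) (-v) t := by
    intro t
    simpa using ((hasDerivAt_id t).smul_const v).const_sub θ
  have hderiv : ∀ t : ℝ, HasDerivAt ψ
      (-⟪gm (θ - t • v), v⟫ + ⟪gm θ, v⟫ - 2 * t * (β / 2 * ‖v‖ ^ 2)) t := by
    intro t
    have h1 : HasDerivAt (fun t : ℝ => lm (θ - t • v)) (-⟪gm (θ - t • v), v⟫) t := by
      have hf : HasFDerivAt lm
          (InnerProductSpace.toDual ℝ H (gm (θ - t • v))) (θ - t • v) := hgm (θ - t • v)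
      have := hf.comp_hasDerivAt t (hline t)
      simpa [InnerProductSpace.toDual_apply_apply, inner_neg_right, Function.comp_def] using this
    have h2 : HasDerivAt (fun t : ℝ => t * ⟪gm θ, v⟫) ⟪gm θ, v⟫ t := by
      simpa using (hasDerivAt_id t).mul_const ⟪gm θ, v⟫
    have h3 : HasDerivAt (fun t : ℝ => t ^ 2 * (β / 2 * ‖v‖ ^ 2))
        (2 * t * (β / 2 * ‖v‖ ^ 2)) t := by
      have := (hasDerivAt_pow 2 t).mul_const (β / 2 * ‖v‖ ^ 2)
      simpa [mul_comm, mul_assoc] using this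
    exact (h1.add h2).sub h3
  have hmono : AntitoneOn ψ (Set.Icc 0 1) := by
    apply antitoneOn_of_deriv_nonpos (convex_Icc 0 1)
    · have hd : Differentiable ℝ ψ := fun t => (hderiv t).differentiableAt
      exact hd.continuous.continuousOn
    · intro t ht
      exact ((hderiv t).differentiableAt).differentiableWithinAt
    · intro t ht
      rw [interior_Icc] at ht
      rw [(hderiv t).deriv]
      have hb : ⟪gm θ - gm (θ - t • v), v⟫ ≤ β * t * ‖v‖ ^ 2 := by
        calc ⟪gm θ - gm (θ - t • v), v⟫ ≤ ‖gm θ - gm (θ - t • v)‖ * ‖v‖ :=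
              real_inner_le_norm _ _
          _ ≤ β * (t * ‖v‖) * ‖v‖ := by
              apply mul_le_mul_of_nonneg_right _ (norm_nonneg v)
              have := hlip.dist_le_mul θ (θ - t • v)
              simp only [dist_eq_norm] at this
              have h0 : θ - (θ - t • v) = t • v := by abel
              rw [h0, Real.coe_toNNReal β hβ.le, norm_smul, Real.norm_eq_abs,
                abs_of_pos ht.1] at this
              linarith
          _ = β * t * ‖v‖ ^ 2 := by ring
      have hinner : -⟪gm (θ - t • v), v⟫ + ⟪gm θ, v⟫ = ⟪gm θ - gm (θ - t • v), v⟫ := by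
        rw [inner_sub_left]; ring
      nlinarith [hb, hinner]
  have h01 : ψ 1 ≤ ψ 0 := hmono (Set.mem_Icc.mpr ⟨le_refl 0, zero_le_one⟩)
    (Set.mem_Icc.mpr ⟨zero_le_one, le_refl 1⟩) zero_le_one
  simp only [hψ, one_smul, one_pow, one_mul, zero_smul, sub_zero, zero_mul,
    sub_zero, add_zero] at h01
  linarith

/-- Generalization of Theorem 1 to the full range of learning rates 0 < η < 2ε/(βG²):
if the main and self-supervised gradients are positively correlated (inner product > ε),
one step of gradient descent on the self-supervised loss strictly decreases the main loss. -/
theorem lethean_stmt5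
    {H : Type*} [NormedAddCommGroup H] [InnerProductSpace ℝ H] [CompleteSpace H]
    (lm ls : H → ℝ) (gm gs : H → H)
    (hgm : ∀ θ : H, HasGradientAt lm (gm θ) θ)
    (hgs : ∀ θ : H, HasGradientAt ls (gs θ) θ)
    (β : ℝ) (hβ : 0 < β)
    (hlip : LipschitzWith β.toNNReal gm)
    (G : ℝ) (hG : 0 < G)
    (hbs : ∀ θ : H, ‖gs θ‖ ≤ G)
    (ε : ℝ) (hε : 0 < ε) :
    ∀ θ : H, ε < ⟪gm θ, gs θ⟫ →
      ∀ η : ℝ, 0 < η → η < 2 * ε / (β * G ^ 2) →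
        lm (θ - η • gs θ) < lm θ := by
  intro θ hcorr η hη hηub
  have key := descent_lemma lm gm hgm β hβ hlip θ (η • gs θ)
  have hin : ⟪gm θ, η • gs θ⟫ = η * ⟪gm θ, gs θ⟫ := real_inner_smul_right _ _ _
  have hnorm : ‖η • gs θ‖ ^ 2 = η ^ 2 * ‖gs θ‖ ^ 2 := by
    rw [norm_smul, Real.norm_eq_abs, mul_pow, sq_abs]
  rw [hin, hnorm] at key
  have hgs2 : ‖gs θ‖ ^ 2 ≤ G ^ 2 := by
    have := hbs θ
    nlinarith [norm_nonneg (gs θ)]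
  have hub : η * (β * G ^ 2) < 2 * ε := by
    rw [lt_div_iff₀ (by positivity)] at hηub
    linarith
  have : β / 2 * (η ^ 2 * ‖gs θ‖ ^ 2) < η * ε := by
    nlinarith [mul_le_mul_of_nonneg_left hgs2 (by positivity : (0:ℝ) ≤ β / 2 * η ^ 2),
      mul_lt_mul_of_pos_left hub (half_pos hη)]
  nlinarith
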